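/- Let n ≥ 2. Let v, u, a be n×n rational upper unitriangular matrices (upper triangular with all diagonal entries equal to 1), let d be an invertible diagonal rational matrix with diagonal entries d₁,…,d_n, let σ be a permutation of {1,…,n} with permutation matrix P_σ (sending the j-th standard basis vector to the σ(j)-th), and set δ = v·d·P_σ·u. Then for every k ∈ ℤ, [[δ, e_{1,n}^k], v a v^{-1}] = v · [e_{σ(1),σ(n)}^{(d_{σ(1)}/d_{σ(n)})·k}, a] · v^{-1}, where [x,y] = x y x^{-1} y^{-1} and e_{i,j}^{t} denotes the matrix I + t·E_{i,j} with E_{i,j} the matrix unit with 1 in position (i,j). -/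

import Mathlib

/-- The conjugation action of `γ` on subgroups: `Δ ↦ γ Δ γ⁻¹`. -/
def conjSubgroup {Γ : Type*} [Group Γ] (γ : Γ) (Δ : Subgroup Γ) : Subgroup Γ :=
  Subgroup.map (MulAut.conj γ).toMonoidHom Δ

/-- The Chabauty topology on `Subgroup Γ`: induced from the product of discrete
topologies on `Γ → Prop` via the membership indicator. -/
def chabautyTopology (Γ : Type*) [Group Γ] : TopologicalSpace (Subgroup Γ) :=
  TopologicalSpace.induced (fun (Δ : Subgroup Γ) (g : Γ) => g ∈ Δ)
    (@Pi.topologicalSpace Γ (fun _ => Prop) (fun _ => ⊥))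

/-- `γ` is a recurrent direction for `Δ`: every Chabauty-open neighbourhood `O` of `Δ`
contains `γ^n Δ γ^{-n}` for some `n ≥ 1`. -/
def IsRecurrentDirection {Γ : Type*} [Group Γ] (γ : Γ) (Δ : Subgroup Γ) : Prop :=
  ∀ O : Set (Subgroup Γ), (chabautyTopology Γ).IsOpen O → Δ ∈ O →
    ∃ n : ℕ, 1 ≤ n ∧ conjSubgroup (γ ^ n) Δ ∈ O

/-- `Δ` is a boomerang subgroup if every `γ` is a recurrent direction for it. -/
def IsBoomerang {Γ : Type*} [Group Γ] (Δ : Subgroup Γ) : Prop :=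
  ∀ γ : Γ, IsRecurrentDirection γ Δ

/-- The elementary matrix `e_{i,j}^t = I + t·E_{i,j}`. -/
def elemMat {n : ℕ} (i j : Fin n) (t : ℚ) : Matrix (Fin n) (Fin n) ℚ :=
  1 + Matrix.single i j t

/-- The commutator `[x,y] = x y x⁻¹ y⁻¹` of square matrices (using the nonsingular
matrix inverse). -/
noncomputable def commMat {n : ℕ} (x y : Matrix (Fin n) (Fin n) ℚ) :
    Matrix (Fin n) (Fin n) ℚ :=
  x * y * x⁻¹ * y⁻¹

open Matrix


section aux
variable {n : ℕ}

lemma elem_mul_elem_neg (i j : Fin n) (hij : i ≠ j) (t : ℚ) :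
    elemMat i j t * elemMat i j (-t) = 1 := by
  simp only [elemMat, add_mul, mul_add, one_mul, mul_one,
    Matrix.single_mul_single_of_ne _ _ _ _ (Ne.symm hij)]
  rw [add_zero, add_assoc, ← Matrix.single_add]
  simp

lemma elem_inv (i j : Fin n) (hij : i ≠ j) (t : ℚ) :
    (elemMat i j t)⁻¹ = elemMat i j (-t) :=
  Matrix.inv_eq_right_inv (elem_mul_elem_neg i j hij t)

-- unitriangular: column of least index
lemma unitri_col (w : Matrix (Fin n) (Fin n) ℚ) (hwt : w.BlockTriangular id)
    (hwd : ∀ i, w i i = 1) (i : Fin n) (hi : ∀ p : Fin n, i ≤ p) (p : Fin n) :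
    w p i = if p = i then 1 else 0 := by
  by_cases h : p = i
  · simp [h, hwd]
  · have : i < p := lt_of_le_of_ne (hi p) (Ne.symm h)
    simp [h, hwt this]

lemma unitri_row (w : Matrix (Fin n) (Fin n) ℚ) (hwt : w.BlockTriangular id)
    (hwd : ∀ i, w i i = 1) (j : Fin n) (hj : ∀ p : Fin n, p ≤ j) (q : Fin n) :
    w j q = if q = j then 1 else 0 := by
  by_cases h : q = j
  · simp [h, hwd]
  · have : q < j := lt_of_le_of_ne (hj q) h
    simp [h, hwt this]

lemma unitri_mul_std (w : Matrix (Fin n) (Fin n) ℚ) (hwt : w.BlockTriangular id)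
    (hwd : ∀ i, w i i = 1) (i j : Fin n) (hi : ∀ p : Fin n, i ≤ p) (t : ℚ) :
    w * Matrix.single i j t = Matrix.single i j t := by
  ext p q
  simp [Matrix.mul_apply, Matrix.single, ite_and, unitri_col w hwt hwd i hi p,
    Finset.sum_ite_eq, eq_comm]
  split_ifs <;> rfl

lemma std_mul_unitri (w : Matrix (Fin n) (Fin n) ℚ) (hwt : w.BlockTriangular id)
    (hwd : ∀ i, w i i = 1) (i j : Fin n) (hj : ∀ p : Fin n, p ≤ j) (t : ℚ) :
    Matrix.single i j t * w = Matrix.single i j t := by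
  ext p q
  simp [Matrix.mul_apply, Matrix.single, ite_and, unitri_row w hwt hwd j hj,
    Finset.sum_ite_eq, eq_comm]

lemma unitri_comm_elem (w : Matrix (Fin n) (Fin n) ℚ) (hwt : w.BlockTriangular id)
    (hwd : ∀ i, w i i = 1) (i j : Fin n) (hi : ∀ p : Fin n, i ≤ p)
    (hj : ∀ p : Fin n, p ≤ j) (t : ℚ) :
    w * elemMat i j t = elemMat i j t * w := by
  simp [elemMat, mul_add, add_mul, unitri_mul_std w hwt hwd i j hi,
    std_mul_unitri w hwt hwd i j hj]

lemma unitri_det (w : Matrix (Fin n) (Fin n) ℚ) (hwt : w.BlockTriangular id)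
    (hwd : ∀ i, w i i = 1) : w.det = 1 := by
  rw [Matrix.det_of_upperTriangular hwt]
  simp [hwd]

end aux

section aux2
variable {n : ℕ}

lemma perm_mul_perm (σ : Equiv.Perm (Fin n)) :
    (Matrix.of fun i j : Fin n => if i = σ j then (1:ℚ) else 0) *
    (Matrix.of fun i j : Fin n => if σ i = j then (1:ℚ) else 0) = 1 := by
  ext p q
  simp only [Matrix.mul_apply, Matrix.of_apply, ite_mul, one_mul, zero_mul,
    Matrix.one_apply]
  rw [Finset.sum_eq_single (σ⁻¹ p)]
  · simp [eq_comm]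
  · intro r _ hr
    rw [if_neg]
    intro h
    exact hr (by simp [h])
  · simp

lemma perm_eq_toMatrix (σ : Equiv.Perm (Fin n)) :
    (Matrix.of fun i j : Fin n => if i = σ j then (1:ℚ) else 0)
    = (σ⁻¹).toPEquiv.toMatrix := by
  ext p q
  simp only [Matrix.of_apply, PEquiv.toMatrix_apply, Equiv.toPEquiv_apply,
    Option.mem_def, Option.some.injEq]
  simp [Equiv.Perm.inv_eq_iff_eq, Equiv.symm_apply_eq]

lemma perm_eq_toMatrix' (σ : Equiv.Perm (Fin n)) :
    (Matrix.of fun i j : Fin n => if σ i = j then (1:ℚ) else 0)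
    = σ.toPEquiv.toMatrix := by
  ext p q
  simp [PEquiv.toMatrix_apply, Equiv.toPEquiv_apply, eq_comm]

lemma perm_conj_std (σ : Equiv.Perm (Fin n)) (i j : Fin n) (t : ℚ) :
    (Matrix.of fun i j : Fin n => if i = σ j then (1:ℚ) else 0) *
      Matrix.single i j t *
    (Matrix.of fun i j : Fin n => if σ i = j then (1:ℚ) else 0)
    = Matrix.single (σ i) (σ j) t := by
  rw [perm_eq_toMatrix, perm_eq_toMatrix', PEquiv.toMatrix_toPEquiv_mul,
    PEquiv.mul_toMatrix_toPEquiv]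
  ext p q
  simp only [Matrix.submatrix_apply, id_eq, Matrix.single, Matrix.of_apply]
  congr 1
  simp only [eq_iff_iff]
  constructor
  · rintro ⟨h1, h2⟩; subst h1; subst h2; simp
  · rintro ⟨h1, h2⟩; subst h1; subst h2; simp

lemma diag_conj_std (d : Fin n → ℚ) (i j : Fin n) (t : ℚ) :
    Matrix.diagonal d * Matrix.single i j t *
      Matrix.diagonal (fun i => (d i)⁻¹)
    = Matrix.single i j (d i * t * (d j)⁻¹) := by
  ext p q
  rw [Matrix.mul_diagonal, Matrix.diagonal_mul]
  simp only [Matrix.single, Matrix.of_apply, mul_ite, mul_zero, ite_mul, zero_mul]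
  by_cases h1 : i = p <;> by_cases h2 : j = q <;> simp [h1, h2]

end aux2

theorem double_commutator_formula {n : ℕ} (hn : 2 ≤ n)
    (v u a : Matrix (Fin n) (Fin n) ℚ)
    (hvt : v.BlockTriangular id) (hvd : ∀ i, v i i = 1)
    (hut : u.BlockTriangular id) (hud : ∀ i, u i i = 1)
    (hat : a.BlockTriangular id) (had : ∀ i, a i i = 1)
    (d : Fin n → ℚ) (hd : ∀ i, d i ≠ 0)
    (σ : Equiv.Perm (Fin n)) (k : ℤ) :
    commMat
      (commMat
        (v * Matrix.diagonal d *
          (Matrix.of fun i j : Fin n => if i = σ j then (1 : ℚ) else 0) * u)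
        (elemMat ⟨0, by omega⟩ ⟨n - 1, by omega⟩ (k : ℚ)))
      (v * a * v⁻¹)
    = v * commMat
        (elemMat (σ ⟨0, by omega⟩) (σ ⟨n - 1, by omega⟩)
          (d (σ ⟨0, by omega⟩) / d (σ ⟨n - 1, by omega⟩) * (k : ℚ))) a * v⁻¹ := by
  set i0 : Fin n := ⟨0, by omega⟩ with hi0def
  set iN : Fin n := ⟨n - 1, by omega⟩ with hiNdef
  have hi0le : ∀ p : Fin n, i0 ≤ p := fun p => by
    simp [hi0def, Fin.le_def]
  have hiNge : ∀ p : Fin n, p ≤ iN := fun p => by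
    have := p.2
    simp only [hiNdef, Fin.le_def]
    omega
  have hne : i0 ≠ iN := by
    simp only [hi0def, hiNdef, ne_eq, Fin.mk.injEq]
    omega
  have hσne : σ i0 ≠ σ iN := fun h => hne (σ.injective h)
  set P := (Matrix.of fun i j : Fin n => if i = σ j then (1 : ℚ) else 0) with hPdef
  set Q := (Matrix.of fun i j : Fin n => if σ i = j then (1 : ℚ) else 0) with hQdef
  set D := Matrix.diagonal d with hDdef
  set D' := Matrix.diagonal (fun i => (d i)⁻¹) with hD'def
  have hPQ : P * Q = 1 := perm_mul_perm σ
  have hDD' : D * D' = 1 := by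
    rw [hDdef, hD'def, Matrix.diagonal_mul_diagonal,
      show (fun i => d i * (d i)⁻¹) = fun _ => (1:ℚ) from
        funext fun i => mul_inv_cancel₀ (hd i), Matrix.diagonal_one]
  have hPinv : P⁻¹ = Q := Matrix.inv_eq_right_inv hPQ
  have hDinv : D⁻¹ = D' := Matrix.inv_eq_right_inv hDD'
  have hvdet : IsUnit v.det := by rw [unitri_det v hvt hvd]; exact isUnit_one
  have hudet : IsUnit u.det := by rw [unitri_det u hut hud]; exact isUnit_one
  have hvv : v * v⁻¹ = 1 := Matrix.mul_nonsing_inv v hvdet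
  have hv'v : v⁻¹ * v = 1 := Matrix.nonsing_inv_mul v hvdet
  have huu : u * u⁻¹ = 1 := Matrix.mul_nonsing_inv u hudet
  set z := elemMat i0 iN (k : ℚ) with hzdef
  set z' := elemMat i0 iN (-(k : ℚ)) with hz'def
  set c := d (σ i0) / d (σ iN) * (k : ℚ) with hcdef
  set e := elemMat (σ i0) (σ iN) c with hedef
  set ei := elemMat (σ i0) (σ iN) (-c) with heidef
  have hzinv : z⁻¹ = z' := elem_inv i0 iN hne _
  have hz'inv : z'⁻¹ = z := by rw [hz'def, elem_inv i0 iN hne, neg_neg]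
  have hz'z : z' * z = 1 := by
    have := elem_mul_elem_neg i0 iN hne (-(k : ℚ))
    rwa [neg_neg] at this
  have heinv : e⁻¹ = ei := elem_inv _ _ hσne _
  have A : ∀ {x y : Matrix (Fin n) (Fin n) ℚ}, x * y = 1 →
      ∀ X : Matrix (Fin n) (Fin n) ℚ, x * (y * X) = X := by
    intro x y h X; rw [← mul_assoc, h, one_mul]
  have C : ∀ {x y : Matrix (Fin n) (Fin n) ℚ}, x * y = y * x →
      ∀ X : Matrix (Fin n) (Fin n) ℚ, x * (y * X) = y * (x * X) := by
    intro x y h X; rw [← mul_assoc, h, mul_assoc]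
  have hcu : ∀ t : ℚ, u * elemMat i0 iN t = elemMat i0 iN t * u :=
    fun t => unitri_comm_elem u hut hud i0 iN hi0le hiNge t
  have hcv : ∀ t : ℚ, v * elemMat i0 iN t = elemMat i0 iN t * v :=
    fun t => unitri_comm_elem v hvt hvd i0 iN hi0le hiNge t
  have hca : ∀ t : ℚ, a * elemMat i0 iN t = elemMat i0 iN t * a :=
    fun t => unitri_comm_elem a hat had i0 iN hi0le hiNge t
  have hcvinv : ∀ t : ℚ, elemMat i0 iN t * v⁻¹ = v⁻¹ * elemMat i0 iN t := by
    intro t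
    calc elemMat i0 iN t * v⁻¹ = v⁻¹ * (v * (elemMat i0 iN t * v⁻¹)) := (A hv'v _).symm
      _ = v⁻¹ * elemMat i0 iN t := by
          rw [← mul_assoc v, hcv t, mul_assoc, hvv, mul_one]
  have hPzQ : ∀ W, P * (z * (Q * W)) = elemMat (σ i0) (σ iN) (k : ℚ) * W := by
    intro W
    rw [← mul_assoc, ← mul_assoc]
    congr 1
    rw [hzdef]
    show P * (1 + Matrix.single i0 iN (k:ℚ)) * Q = _
    rw [mul_add, mul_one, add_mul, hPQ, perm_conj_std]
    rfl
  have hDeD' : ∀ W, D * (elemMat (σ i0) (σ iN) (k : ℚ) * (D' * W)) = e * W := by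
    intro W
    rw [← mul_assoc, ← mul_assoc]
    congr 1
    show D * (1 + Matrix.single (σ i0) (σ iN) (k:ℚ)) * D' = _
    rw [mul_add, mul_one, add_mul, hDD', hDdef, hD'def, diag_conj_std,
      show d (σ i0) * (k:ℚ) * (d (σ iN))⁻¹ = c by rw [hcdef]; ring]
    rfl
  have step1 : commMat (v * D * P * u) z = v * (e * (v⁻¹ * z')) := by
    unfold commMat
    rw [hzinv, Matrix.mul_inv_rev, Matrix.mul_inv_rev, Matrix.mul_inv_rev,
      hPinv, hDinv]
    simp only [mul_assoc]
    rw [C (hcu _), A huu, hPzQ, hDeD']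
  rw [step1]
  unfold commMat
  rw [heinv, Matrix.mul_inv_rev, Matrix.mul_inv_rev, Matrix.mul_inv_rev,
    Matrix.mul_inv_rev, Matrix.mul_inv_rev,
    Matrix.nonsing_inv_nonsing_inv v hvdet, hz'inv, heinv]
  simp only [mul_assoc]
  rw [A hv'v (a⁻¹ * v⁻¹), C ((hcv _).symm), A hv'v, C ((hca _).symm),
    C (hcvinv _), A hz'z, A hv'v]
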